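/- arXiv:2010.08299 — 2 statements merged into one kernel-verified Lean document; each statement's English description precedes it below -/
import Mathlib

section
/- For real α ≥ 0, ε ≥ 0 and real β, γ > 0, the integral R(α,β,γ,β,ε) = ∫₀¹ e^{-αx} x^{β-1} (1-x)^{γ-1} · ₀F₁(;β;εx) dx equals e^{-α} B(β,γ) Σ_{k,l≥0} α^k ε^l (γ)_k / (k! l! (β+γ)_{k+l}). -/
open Real MeasureTheory

/-- Pochhammer (rising factorial) symbol on the reals. -/
noncomputable def poch (x : ℝ) (k : ℕ) : ℝ := (ascPochhammer ℝ k).eval x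

lemma poch_zero (x : ℝ) : poch x 0 = 1 := by simp [poch]

lemma poch_succ (x : ℝ) (n : ℕ) : poch x (n + 1) = poch x n * (x + n) :=
  ascPochhammer_succ_eval n x

lemma poch_pos {x : ℝ} (hx : 0 < x) (n : ℕ) : 0 < poch x n :=
  ascPochhammer_pos n x hx

lemma poch_add (x : ℝ) (m n : ℕ) : poch x (m + n) = poch x m * poch (x + m) n := by
  induction n with
  | zero => simp [poch_zero]
  | succ n ih =>
    rw [← add_assoc, poch_succ, ih, poch_succ]
    push_cast
    ring

lemma min_le_poch {x : ℝ} (hx : 0 < x) (n : ℕ) : min 1 x ≤ poch x n := by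
  induction n with
  | zero => simp [poch_zero]
  | succ n ih =>
    rcases Nat.eq_zero_or_pos n with h | h
    · subst h
      rw [poch_succ, poch_zero]
      simpa using min_le_right 1 x
    · rw [poch_succ]
      have h1 : (1:ℝ) ≤ x + n := by
        have : (1:ℝ) ≤ (n:ℝ) := by exact_mod_cast h
        linarith
      calc min 1 x ≤ poch x n * 1 := by simpa using ih
        _ ≤ poch x n * (x + n) := by
            exact mul_le_mul_of_nonneg_left h1 (poch_pos hx n).le

lemma poch_mono {x y : ℝ} (hx : 0 < x) (hxy : x ≤ y) (n : ℕ) : poch x n ≤ poch y n := by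
  induction n with
  | zero => simp [poch_zero]
  | succ n ih =>
    rw [poch_succ, poch_succ]
    have := poch_pos hx n
    apply mul_le_mul ih (by linarith) (by positivity) (poch_pos (lt_of_lt_of_le hx hxy) n).le

lemma Gamma_poch {x : ℝ} (hx : 0 < x) (n : ℕ) :
    Real.Gamma (x + n) = Real.Gamma x * poch x n := by
  induction n with
  | zero => simp [poch_zero]
  | succ n ih =>
    have h1 : x + ((n : ℝ) + 1) = (x + n) + 1 := by ring
    have h2 : (0:ℝ) < x + n := by positivity
    push_cast
    rw [h1, Real.Gamma_add_one (ne_of_gt h2), ih, poch_succ]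
    ring

lemma beta_integrable {a b : ℝ} (ha : 0 < a) (hb : 0 < b) :
    IntegrableOn (fun x : ℝ => x ^ (a - 1) * (1 - x) ^ (b - 1)) (Set.Ioo (0:ℝ) 1) := by
  have hc : IntervalIntegrable
      (fun x : ℝ => (x : ℂ) ^ ((a:ℂ) - 1) * (1 - (x : ℂ)) ^ ((b:ℂ) - 1)) volume 0 1 :=
    Complex.betaIntegral_convergent (by simpa using ha) (by simpa using hb)
  have h2 : IntegrableOn
      (fun x : ℝ => (x : ℂ) ^ ((a:ℂ) - 1) * (1 - (x : ℂ)) ^ ((b:ℂ) - 1)) (Set.Ioc 0 1) :=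
    (intervalIntegrable_iff_integrableOn_Ioc_of_le (by norm_num)).mp hc
  have h3 : IntegrableOn (fun x : ℝ =>
      ((x : ℂ) ^ ((a:ℂ) - 1) * (1 - (x : ℂ)) ^ ((b:ℂ) - 1)).re) (Set.Ioo (0:ℝ) 1) :=
    (h2.mono_set Set.Ioo_subset_Ioc_self).re
  apply h3.congr_fun _ measurableSet_Ioo
  intro x hx
  have hx0 : (0:ℝ) ≤ x := hx.1.le
  have hx1 : (0:ℝ) ≤ 1 - x := by linarith [hx.2]
  have e1 : ((x:ℂ)) ^ ((a:ℂ) - 1) = ((x ^ (a-1) : ℝ) : ℂ) := by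
    rw [Complex.ofReal_cpow hx0]; push_cast; ring_nf
  have e2 : (1 - (x:ℂ)) ^ ((b:ℂ) - 1) = (((1 - x) ^ (b-1) : ℝ) : ℂ) := by
    rw [Complex.ofReal_cpow hx1]; push_cast; ring_nf
  simp [e1, e2, ← Complex.ofReal_mul]

lemma realBeta {a b : ℝ} (ha : 0 < a) (hb : 0 < b) :
    ∫ x in Set.Ioo (0:ℝ) 1, x ^ (a - 1) * (1 - x) ^ (b - 1) =
      Real.Gamma a * Real.Gamma b / Real.Gamma (a + b) := by
  have key := Complex.Gamma_mul_Gamma_eq_betaIntegral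
    (s := (a:ℂ)) (t := (b:ℂ)) (by simpa using ha) (by simpa using hb)
  have hbeta : Complex.betaIntegral a b
      = ((∫ x in Set.Ioo (0:ℝ) 1, x ^ (a - 1) * (1 - x) ^ (b - 1) : ℝ) : ℂ) := by
    rw [Complex.betaIntegral, intervalIntegral.integral_of_le (by norm_num : (0:ℝ) ≤ 1)]
    have hcongr : ∀ x ∈ Set.Ioc (0:ℝ) 1,
        (x : ℂ) ^ ((a:ℂ) - 1) * (1 - (x : ℂ)) ^ ((b:ℂ) - 1)
        = ((x ^ (a - 1) * (1 - x) ^ (b - 1) : ℝ) : ℂ) := by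
      intro x hx
      have hx0 : (0:ℝ) ≤ x := hx.1.le
      have hx1 : (0:ℝ) ≤ 1 - x := by linarith [hx.2]
      have e1 : ((x:ℂ)) ^ ((a:ℂ) - 1) = ((x ^ (a-1) : ℝ) : ℂ) := by
        rw [Complex.ofReal_cpow hx0]; push_cast; ring_nf
      have e2 : (1 - (x:ℂ)) ^ ((b:ℂ) - 1) = (((1 - x) ^ (b-1) : ℝ) : ℂ) := by
        rw [Complex.ofReal_cpow hx1]; push_cast; ring_nf
      simp [e1, e2, ← Complex.ofReal_mul]
    rw [MeasureTheory.setIntegral_congr_fun measurableSet_Ioc hcongr,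
      ← MeasureTheory.integral_Ioc_eq_integral_Ioo]
    exact integral_ofReal (𝕜 := ℂ)
  rw [hbeta, ← Complex.ofReal_add, Complex.Gamma_ofReal, Complex.Gamma_ofReal,
    Complex.Gamma_ofReal, ← Complex.ofReal_mul, ← Complex.ofReal_mul] at key
  have := Complex.ofReal_inj.mp key
  have hG : Real.Gamma (a + b) ≠ 0 := (Real.Gamma_pos_of_pos (by linarith)).ne'
  field_simp
  linarith [this]

lemma exp_tsum (y : ℝ) : Real.exp y = ∑' n : ℕ, y ^ n / n.factorial := by
  rw [Real.exp_eq_exp_ℝ, NormedSpace.exp_eq_tsum_div]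

lemma summable_oF1_norm {β : ℝ} (hβ : 0 < β) (y : ℝ) :
    Summable (fun l : ℕ => ‖y ^ l / (poch β l * l.factorial)‖) := by
  have M : Summable (fun l : ℕ => (min 1 β)⁻¹ * (|y| ^ l / l.factorial)) :=
    (Real.summable_pow_div_factorial |y|).mul_left _
  apply Summable.of_nonneg_of_le (fun l => norm_nonneg _) _ M
  intro l
  have h1 : 0 < poch β l := poch_pos hβ l
  have h2 : 0 < min 1 β := lt_min one_pos hβ
  rw [Real.norm_eq_abs, abs_div, abs_pow,
    abs_of_pos (show (0:ℝ) < poch β l * l.factorial by positivity)]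
  rw [div_le_iff₀ (by positivity)]
  have : (min 1 β)⁻¹ * (|y| ^ l / l.factorial) * (poch β l * l.factorial)
      = |y| ^ l * ((min 1 β)⁻¹ * poch β l) := by
    field_simp
  rw [this]
  nlinarith [min_le_poch hβ l, pow_nonneg (abs_nonneg y) l,
    (inv_pos.mpr h2).le, mul_le_mul_of_nonneg_left (min_le_poch hβ l) (inv_pos.mpr h2).le,
    inv_mul_cancel₀ h2.ne']

set_option maxHeartbeats 1000000 in
lemma summable_t {α ε β γ : ℝ} (hα : 0 ≤ α) (hε : 0 ≤ ε) (hβ : 0 < β) (hγ : 0 < γ) :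
    Summable (fun kl : ℕ × ℕ =>
      α ^ kl.1 * ε ^ kl.2 * poch γ kl.1 /
        (kl.1.factorial * kl.2.factorial * poch (β + γ) (kl.1 + kl.2))) := by
  have hbg : (0:ℝ) < β + γ := by linarith
  have hM : (0:ℝ) < min 1 (β + γ) := lt_min one_pos hbg
  have hsum : Summable (fun kl : ℕ × ℕ =>
      ((min 1 (β + γ))⁻¹ * (α ^ kl.1 / kl.1.factorial)) * (ε ^ kl.2 / kl.2.factorial)) :=
    Summable.mul_of_nonneg ((Real.summable_pow_div_factorial α).mul_left _)
      (Real.summable_pow_div_factorial ε)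
      (fun k => by positivity) (fun l => by positivity)
  apply Summable.of_nonneg_of_le _ _ hsum
  · intro kl
    have := poch_pos hγ kl.1
    have := poch_pos hbg (kl.1 + kl.2)
    positivity
  rintro ⟨k, l⟩
  have hP : 0 < poch (β + γ) (k + l) := poch_pos hbg (k + l)
  have hpk : 0 < poch γ k := poch_pos hγ k
  have key : poch γ k * min 1 (β + γ) ≤ poch (β + γ) (k + l) := by
    rw [poch_add]
    calc poch γ k * min 1 (β + γ)
        ≤ poch (β + γ) k * min 1 (β + γ + k) := by
          apply mul_le_mul (poch_mono hγ (by linarith) k)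
            (min_le_min le_rfl (le_add_of_nonneg_right (Nat.cast_nonneg k))) hM.le (poch_pos hbg k).le
      _ ≤ poch (β + γ) k * poch (β + γ + k) l := by
          apply mul_le_mul_of_nonneg_left
            (min_le_poch (by positivity) l) (poch_pos hbg k).le
  have key2 : poch γ k ≤ (min 1 (β + γ))⁻¹ * poch (β + γ) (k + l) := by
    calc poch γ k = (min 1 (β + γ))⁻¹ * (poch γ k * min 1 (β + γ)) := by
          field_simp
      _ ≤ (min 1 (β + γ))⁻¹ * poch (β + γ) (k + l) :=
          mul_le_mul_of_nonneg_left key (inv_pos.mpr hM).le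
  have hR : ((min 1 (β + γ))⁻¹ * (α ^ k / k.factorial)) * (ε ^ l / l.factorial)
      = α ^ k * ε ^ l * ((min 1 (β + γ))⁻¹ * poch (β + γ) (k + l)) /
          (k.factorial * l.factorial * poch (β + γ) (k + l)) := by
    have h1 : (k.factorial : ℝ) ≠ 0 := by positivity
    have h2 : (l.factorial : ℝ) ≠ 0 := by positivity
    field_simp
  simp only [hR]
  rw [div_le_div_iff_of_pos_right (by positivity)]
  exact mul_le_mul_of_nonneg_left key2 (by positivity)

lemma term_integral {α ε β γ : ℝ} (hα : 0 ≤ α) (hε : 0 ≤ ε) (hβ : 0 < β) (hγ : 0 < γ)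
    (k l : ℕ) :
    ∫ x in Set.Ioo (0:ℝ) 1,
        Real.exp (-α) * (((α * (1 - x)) ^ k / k.factorial) *
          ((ε * x) ^ l / (poch β l * l.factorial)) * (x ^ (β - 1) * (1 - x) ^ (γ - 1))) =
      Real.exp (-α) * (Real.Gamma β * Real.Gamma γ / Real.Gamma (β + γ)) *
        (α ^ k * ε ^ l * poch γ k /
          (k.factorial * l.factorial * poch (β + γ) (k + l))) := by
  have hbl : (0:ℝ) < β + l := by positivity
  have hgk : (0:ℝ) < γ + k := by positivity
  set C : ℝ := Real.exp (-α) * α ^ k * ε ^ l / (k.factorial * l.factorial * poch β l) with hC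
  have hcongr : ∀ x ∈ Set.Ioo (0:ℝ) 1,
      Real.exp (-α) * (((α * (1 - x)) ^ k / k.factorial) *
        ((ε * x) ^ l / (poch β l * l.factorial)) * (x ^ (β - 1) * (1 - x) ^ (γ - 1)))
      = C * (x ^ ((β + l) - 1) * (1 - x) ^ ((γ + k) - 1)) := by
    intro x hx
    have hx0 : (0:ℝ) < x := hx.1
    have hx1 : (0:ℝ) < 1 - x := by linarith [hx.2]
    have e1 : x ^ ((β + l) - 1) = x ^ (β - 1) * x ^ l := by
      rw [← Real.rpow_natCast x l, ← Real.rpow_add hx0]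
      ring_nf
    have e2 : (1 - x) ^ ((γ + k) - 1) = (1 - x) ^ (γ - 1) * (1 - x) ^ k := by
      rw [← Real.rpow_natCast (1 - x) k, ← Real.rpow_add hx1]
      ring_nf
    rw [e1, e2, hC, mul_pow, mul_pow]
    have h1 : (k.factorial : ℝ) ≠ 0 := by positivity
    have h2 : (l.factorial : ℝ) ≠ 0 := by positivity
    have h3 : poch β l ≠ 0 := (poch_pos hβ l).ne'
    field_simp
  rw [MeasureTheory.setIntegral_congr_fun measurableSet_Ioo hcongr,
    MeasureTheory.integral_const_mul, realBeta hbl hgk]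
  have g1 : Real.Gamma (β + l) = Real.Gamma β * poch β l := Gamma_poch hβ l
  have g2 : Real.Gamma (γ + k) = Real.Gamma γ * poch γ k := Gamma_poch hγ k
  have g3 : Real.Gamma ((β + l) + (γ + k)) = Real.Gamma (β + γ) * poch (β + γ) (k + l) := by
    have : (β + l) + (γ + k) = (β + γ) + ((k + l : ℕ) : ℝ) := by push_cast; ring
    rw [this, Gamma_poch (by linarith) (k + l)]
  rw [g1, g2, g3, hC]
  have h1 : (k.factorial : ℝ) ≠ 0 := by positivity
  have h2 : (l.factorial : ℝ) ≠ 0 := by positivity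
  have h3 : poch β l ≠ 0 := (poch_pos hβ l).ne'
  have h4 : poch (β + γ) (k + l) ≠ 0 := (poch_pos (by linarith) (k + l)).ne'
  have h5 : Real.Gamma (β + γ) ≠ 0 := (Real.Gamma_pos_of_pos (by linarith)).ne'
  field_simp

lemma term_integrable {α ε β γ : ℝ} (hα : 0 ≤ α) (hε : 0 ≤ ε) (hβ : 0 < β) (hγ : 0 < γ)
    (k l : ℕ) :
    IntegrableOn (fun x : ℝ =>
        Real.exp (-α) * (((α * (1 - x)) ^ k / k.factorial) *
          ((ε * x) ^ l / (poch β l * l.factorial)) * (x ^ (β - 1) * (1 - x) ^ (γ - 1))))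
      (Set.Ioo (0:ℝ) 1) := by
  have hbl : (0:ℝ) < β + l := by positivity
  have hgk : (0:ℝ) < γ + k := by positivity
  set C : ℝ := Real.exp (-α) * α ^ k * ε ^ l / (k.factorial * l.factorial * poch β l) with hC
  have hbase : IntegrableOn
      (fun x : ℝ => C * (x ^ ((β + l) - 1) * (1 - x) ^ ((γ + k) - 1)))
      (Set.Ioo (0:ℝ) 1) := (beta_integrable hbl hgk).const_mul C
  apply hbase.congr_fun _ measurableSet_Ioo
  intro x hx
  dsimp only
  have hx0 : (0:ℝ) < x := hx.1
  have hx1 : (0:ℝ) < 1 - x := by linarith [hx.2]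
  have e1 : x ^ ((β + l) - 1) = x ^ (β - 1) * x ^ l := by
    rw [← Real.rpow_natCast x l, ← Real.rpow_add hx0]
    ring_nf
  have e2 : (1 - x) ^ ((γ + k) - 1) = (1 - x) ^ (γ - 1) * (1 - x) ^ k := by
    rw [← Real.rpow_natCast (1 - x) k, ← Real.rpow_add hx1]
    ring_nf
  rw [e1, e2, hC, mul_pow, mul_pow]
  have h1 : (k.factorial : ℝ) ≠ 0 := by positivity
  have h2 : (l.factorial : ℝ) ≠ 0 := by positivity
  have h3 : poch β l ≠ 0 := (poch_pos hβ l).ne'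
  field_simp

theorem r_function_evaluation (α ε β γ : ℝ) (hα : 0 ≤ α) (hε : 0 ≤ ε)
    (hβ : 0 < β) (hγ : 0 < γ) :
    ∫ x in Set.Ioo (0:ℝ) 1,
        Real.exp (-α * x) * x ^ (β - 1) * (1 - x) ^ (γ - 1) *
          (∑' l : ℕ, (ε * x) ^ l / (poch β l * l.factorial)) =
      Real.exp (-α) * (Real.Gamma β * Real.Gamma γ / Real.Gamma (β + γ)) *
        ∑' kl : ℕ × ℕ,
          α ^ kl.1 * ε ^ kl.2 * poch γ kl.1 /
            (kl.1.factorial * kl.2.factorial * poch (β + γ) (kl.1 + kl.2)) := by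
  set F : ℕ × ℕ → ℝ → ℝ := fun kl x =>
    Real.exp (-α) * (((α * (1 - x)) ^ kl.1 / kl.1.factorial) *
      ((ε * x) ^ kl.2 / (poch β kl.2 * kl.2.factorial)) *
      (x ^ (β - 1) * (1 - x) ^ (γ - 1))) with hF
  have hpoint : ∀ x ∈ Set.Ioo (0:ℝ) 1,
      Real.exp (-α * x) * x ^ (β - 1) * (1 - x) ^ (γ - 1) *
        (∑' l : ℕ, (ε * x) ^ l / (poch β l * l.factorial)) = ∑' kl : ℕ × ℕ, F kl x := by
    intro x hx
    have hsumA : Summable (fun k : ℕ => ‖(α * (1 - x)) ^ k / k.factorial‖) := by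
      have := Real.summable_pow_div_factorial |α * (1 - x)|
      apply this.congr
      intro k
      rw [Real.norm_eq_abs, abs_div, abs_pow, Nat.abs_cast]
    have hsumB := summable_oF1_norm hβ (ε * x)
    have hprod : (∑' k : ℕ, (α * (1 - x)) ^ k / k.factorial) *
        (∑' l : ℕ, (ε * x) ^ l / (poch β l * l.factorial))
        = ∑' kl : ℕ × ℕ, ((α * (1 - x)) ^ kl.1 / kl.1.factorial) *
            ((ε * x) ^ kl.2 / (poch β kl.2 * kl.2.factorial)) :=
      tsum_mul_tsum_of_summable_norm hsumA hsumB
    have hexp : Real.exp (-α * x)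
        = Real.exp (-α) * ∑' k : ℕ, (α * (1 - x)) ^ k / k.factorial := by
      rw [← exp_tsum, ← Real.exp_add]
      ring_nf
    calc Real.exp (-α * x) * x ^ (β - 1) * (1 - x) ^ (γ - 1) *
          (∑' l : ℕ, (ε * x) ^ l / (poch β l * l.factorial))
        = Real.exp (-α) * (((∑' k : ℕ, (α * (1 - x)) ^ k / k.factorial) *
            (∑' l : ℕ, (ε * x) ^ l / (poch β l * l.factorial))) *
            (x ^ (β - 1) * (1 - x) ^ (γ - 1))) := by
          rw [hexp]; ring
      _ = Real.exp (-α) * ((∑' kl : ℕ × ℕ, ((α * (1 - x)) ^ kl.1 / kl.1.factorial) *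
            ((ε * x) ^ kl.2 / (poch β kl.2 * kl.2.factorial))) *
            (x ^ (β - 1) * (1 - x) ^ (γ - 1))) := by rw [hprod]
      _ = ∑' kl : ℕ × ℕ, F kl x := by
          rw [← tsum_mul_right, ← tsum_mul_left]
  rw [MeasureTheory.setIntegral_congr_fun measurableSet_Ioo hpoint]
  have hInt : ∀ kl : ℕ × ℕ, IntegrableOn (F kl) (Set.Ioo (0:ℝ) 1) :=
    fun kl => term_integrable hα hε hβ hγ kl.1 kl.2
  have hval : ∀ kl : ℕ × ℕ, ∫ x in Set.Ioo (0:ℝ) 1, F kl x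
      = Real.exp (-α) * (Real.Gamma β * Real.Gamma γ / Real.Gamma (β + γ)) *
        (α ^ kl.1 * ε ^ kl.2 * poch γ kl.1 /
          (kl.1.factorial * kl.2.factorial * poch (β + γ) (kl.1 + kl.2))) :=
    fun kl => term_integral hα hε hβ hγ kl.1 kl.2
  have hnonneg : ∀ kl : ℕ × ℕ, ∀ x ∈ Set.Ioo (0:ℝ) 1, 0 ≤ F kl x := by
    intro kl x hx
    have hx0 : (0:ℝ) < x := hx.1
    have hx1 : (0:ℝ) < 1 - x := by linarith [hx.2]
    have := poch_pos hβ kl.2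
    rw [hF]
    positivity
  have hfin : ∑' kl : ℕ × ℕ, ∫⁻ x, ‖F kl x‖₊ ∂(volume.restrict (Set.Ioo (0:ℝ) 1)) ≠ ⊤ := by
    have heq : ∀ kl : ℕ × ℕ,
        ∫⁻ x, ‖F kl x‖₊ ∂(volume.restrict (Set.Ioo (0:ℝ) 1))
          = ENNReal.ofReal (∫ x in Set.Ioo (0:ℝ) 1, F kl x) := by
      intro kl
      simp_rw [← enorm_eq_nnnorm]
      rw [← ofReal_integral_norm_eq_lintegral_enorm (hInt kl)]
      congr 1
      apply MeasureTheory.setIntegral_congr_fun measurableSet_Ioo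
      intro x hx
      dsimp only
      rw [Real.norm_eq_abs, abs_of_nonneg (hnonneg kl x hx)]
    simp only [heq, hval]
    rw [← ENNReal.ofReal_tsum_of_nonneg]
    · exact ENNReal.ofReal_ne_top
    · intro kl
      have := poch_pos hγ kl.1
      have := poch_pos (show (0:ℝ) < β + γ by linarith) (kl.1 + kl.2)
      have hB := Real.Gamma_pos_of_pos hβ
      have hC := Real.Gamma_pos_of_pos hγ
      have hD := Real.Gamma_pos_of_pos (show (0:ℝ) < β + γ by linarith)
      positivity
    · exact (summable_t hα hε hβ hγ).mul_left _
  rw [MeasureTheory.integral_tsum (fun kl => (hInt kl).aestronglyMeasurable) hfin]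
  rw [tsum_congr hval, tsum_mul_left]
end

section
/- For every positive integer n, n − 2(Γ((n+1)/2)/Γ(n/2))² ∈ (0, 1/2]; in particular the limit as σ → ∞ of the MMSE, namely n − 2(Γ((n+1)/2)/Γ(n/2))², is positive and bounded by 1/2. -/
set_option maxHeartbeats 1000000

open Filter Topology

noncomputable def chiB (n : ℕ) : ℝ :=
  (Real.Gamma (((n : ℝ) + 1) / 2) / Real.Gamma ((n : ℝ) / 2)) ^ 2

noncomputable def chiC (m : ℕ) : ℝ := ((m : ℝ) + 1/4) / chiB (2*m+1)

lemma chiB_pos (n : ℕ) (hn : 0 < n) : 0 < chiB n := by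
  have h1 : 0 < Real.Gamma (((n : ℝ) + 1) / 2) :=
    Real.Gamma_pos_of_pos (by positivity)
  have h2 : 0 < Real.Gamma ((n : ℝ) / 2) := by
    have : (0:ℝ) < n := by exact_mod_cast hn
    exact Real.Gamma_pos_of_pos (by linarith)
  unfold chiB
  positivity

lemma chiB_one : chiB 1 = 1 / Real.pi := by
  unfold chiB
  have e1 : (((1:ℕ):ℝ) + 1)/2 = 1 := by norm_num
  have e2 : ((1:ℕ):ℝ)/2 = 1/2 := by norm_num
  rw [e1, e2, Real.Gamma_one, Real.Gamma_one_half_eq, div_pow, one_pow,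
    Real.sq_sqrt Real.pi_pos.le]

lemma chiB_odd_eq (m : ℕ) :
    chiB (2*m+1) = (Real.Gamma ((m:ℝ)+1) / Real.Gamma ((m:ℝ)+1/2)) ^ 2 := by
  unfold chiB
  have e1 : (((2*m+1:ℕ):ℝ)+1)/2 = (m:ℝ)+1 := by push_cast; ring
  have e2 : ((2*m+1:ℕ):ℝ)/2 = (m:ℝ)+1/2 := by push_cast; ring
  rw [e1, e2]

lemma chiB_succ_odd (m : ℕ) :
    chiB (2*m+3) = chiB (2*m+1) * ((m:ℝ)+1)^2 / ((m:ℝ)+1/2)^2 := by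
  have e1 : (((2*m+3:ℕ):ℝ)+1)/2 = ((m:ℝ)+1)+1 := by push_cast; ring
  have e2 : ((2*m+3:ℕ):ℝ)/2 = ((m:ℝ)+1/2)+1 := by push_cast; ring
  have g1 : Real.Gamma (((m:ℝ)+1)+1) = ((m:ℝ)+1) * Real.Gamma ((m:ℝ)+1) :=
    Real.Gamma_add_one (by positivity)
  have g2 : Real.Gamma (((m:ℝ)+1/2)+1) = ((m:ℝ)+1/2) * Real.Gamma ((m:ℝ)+1/2) :=
    Real.Gamma_add_one (by positivity)
  have hG : Real.Gamma ((m:ℝ)+1/2) ≠ 0 := (Real.Gamma_pos_of_pos (by positivity)).ne'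
  rw [chiB, e1, e2, g1, g2, chiB_odd_eq]
  field_simp

lemma chiB_even (m : ℕ) :
    chiB (2*m+2) = ((m:ℝ)+1/2)^2 / chiB (2*m+1) := by
  have e1 : (((2*m+2:ℕ):ℝ)+1)/2 = ((m:ℝ)+1/2)+1 := by push_cast; ring
  have e2 : ((2*m+2:ℕ):ℝ)/2 = (m:ℝ)+1 := by push_cast; ring
  have g2 : Real.Gamma (((m:ℝ)+1/2)+1) = ((m:ℝ)+1/2) * Real.Gamma ((m:ℝ)+1/2) :=
    Real.Gamma_add_one (by positivity)
  have hG : Real.Gamma ((m:ℝ)+1/2) ≠ 0 := (Real.Gamma_pos_of_pos (by positivity)).ne'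
  have hG1 : Real.Gamma ((m:ℝ)+1) ≠ 0 := (Real.Gamma_pos_of_pos (by positivity)).ne'
  rw [chiB, e1, e2, g2, chiB_odd_eq]
  field_simp

lemma chiB_wallis (m : ℕ) :
    chiB (2*m+1) = (2*(m:ℝ)+1) * Real.Wallis.W m / Real.pi := by
  induction m with
  | zero =>
      simp [Real.Wallis.W, chiB_one]
  | succ m ih =>
      have h3 : 2*(m+1)+1 = 2*m+3 := by ring
      rw [h3, chiB_succ_odd, ih, Real.Wallis.W_succ]
      have h1 : (2*(m:ℝ)+1) ≠ 0 := by positivity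
      have h2 : (2*(m:ℝ)+3) ≠ 0 := by positivity
      have hπ : Real.pi ≠ 0 := Real.pi_ne_zero
      push_cast
      field_simp
      ring

lemma chiC_pos (m : ℕ) : 0 < chiC m := by
  have := chiB_pos (2*m+1) (by omega)
  unfold chiC; positivity

lemma chiC_succ (m : ℕ) :
    chiC (m+1) = chiC m * (((m:ℝ)+5/4) * ((m:ℝ)+1/2)^2) / (((m:ℝ)+1/4) * ((m:ℝ)+1)^2) := by
  have h3 : 2*(m+1)+1 = 2*m+3 := by ring
  have hB := chiB_pos (2*m+1) (by omega)
  have h1 : ((m:ℝ)+1/2)^2 ≠ 0 := by positivity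
  have h2 : ((m:ℝ)+1)^2 ≠ 0 := by positivity
  have h4 : ((m:ℝ)+1/4) ≠ 0 := by positivity
  unfold chiC
  rw [h3, chiB_succ_odd]
  push_cast
  field_simp
  ring

lemma chiC_strictMono : StrictMono chiC := by
  apply strictMono_nat_of_lt_succ
  intro m
  rw [chiC_succ]
  have hc := chiC_pos m
  rw [lt_div_iff₀ (by positivity)]
  have h : ((m:ℝ)+1/4) * ((m:ℝ)+1)^2 < ((m:ℝ)+5/4) * ((m:ℝ)+1/2)^2 := by
    nlinarith [sq_nonneg ((m:ℝ))]
  nlinarith [chiC_pos m]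

lemma chiC_tendsto : Tendsto chiC atTop (𝓝 1) := by
  have hW := Real.Wallis.tendsto_W_nhds_pi_div_two
  have hWne : (Real.pi/2 : ℝ) ≠ 0 := by positivity
  have h2 : Tendsto (fun m : ℕ => Real.pi / Real.Wallis.W m) atTop (𝓝 (Real.pi / (Real.pi/2))) :=
    Filter.Tendsto.div (tendsto_const_nhds : Tendsto (fun _ : ℕ => Real.pi) atTop (𝓝 Real.pi))
      hW hWne
  have h3 : Tendsto (fun m : ℕ => (2*(m:ℝ)+1)) atTop atTop :=
    (tendsto_natCast_atTop_atTop.const_mul_atTop two_pos).atTop_add tendsto_const_nhds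
  have h5 : Tendsto (fun m : ℕ => (1:ℝ)/(2*(m:ℝ)+1)) atTop (𝓝 0) := by
    simpa [Pi.inv_def] using h3.inv_tendsto_atTop
  have h4 : Tendsto (fun m : ℕ => ((m:ℝ)+1/4)/(2*(m:ℝ)+1)) atTop (𝓝 (1/2)) := by
    have h6 : Tendsto (fun m : ℕ => 1/2 - (1/4) * ((1:ℝ)/(2*(m:ℝ)+1))) atTop (𝓝 (1/2)) := by
      have h7 := Filter.Tendsto.sub
        (tendsto_const_nhds : Tendsto (fun _ : ℕ => (1/2:ℝ)) atTop (𝓝 (1/2)))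
        (h5.const_mul (1/4 : ℝ))
      simpa using h7
    apply h6.congr
    intro m
    have hne : (2*(m:ℝ)+1) ≠ 0 := by positivity
    field_simp
    ring
  have h8 := h4.mul h2
  have h9 : (1/2 : ℝ) * (Real.pi / (Real.pi/2)) = 1 := by
    field_simp
  rw [h9] at h8
  apply h8.congr
  intro m
  have hWpos := Real.Wallis.W_pos m
  have hne : (2*(m:ℝ)+1) ≠ 0 := by positivity
  unfold chiC
  rw [chiB_wallis]
  field_simp

lemma chiC_le_one (m : ℕ) : chiC m ≤ 1 :=
  chiC_strictMono.monotone.ge_of_tendsto chiC_tendsto m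

lemma chiC_lt_one (m : ℕ) : chiC m < 1 :=
  lt_of_lt_of_le (chiC_strictMono (Nat.lt_succ_self m)) (chiC_le_one (m+1))

noncomputable def chiD (m : ℕ) : ℝ := 1 - 1/(4*(2*(m:ℝ)+1)^2)

lemma chiD_pos (m : ℕ) : 0 < chiD m := by
  unfold chiD
  have h1 : (1:ℝ) ≤ (2*(m:ℝ)+1)^2 := by nlinarith [Nat.cast_nonneg (α := ℝ) m]
  have h2 : (0:ℝ) < 4*(2*(m:ℝ)+1)^2 := by positivity
  have : 1/(4*(2*(m:ℝ)+1)^2) ≤ 1/4 := by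
    rw [div_le_div_iff₀ h2 (by norm_num)]; linarith
  linarith

lemma chiD_tendsto : Tendsto chiD atTop (𝓝 1) := by
  have h3 : Tendsto (fun m : ℕ => (2*(m:ℝ)+1)) atTop atTop :=
    (tendsto_natCast_atTop_atTop.const_mul_atTop two_pos).atTop_add tendsto_const_nhds
  have h4 : Tendsto (fun m : ℕ => 4*(2*(m:ℝ)+1)^2) atTop atTop :=
    ((tendsto_pow_atTop two_ne_zero).comp h3).const_mul_atTop (by norm_num : (0:ℝ) < 4)
  have h5 := h4.inv_tendsto_atTop
  have h6 := Filter.Tendsto.sub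
    (tendsto_const_nhds : Tendsto (fun _ : ℕ => (1:ℝ)) atTop (𝓝 1)) h5
  rw [sub_zero] at h6
  apply h6.congr
  intro m
  simp [chiD, one_div]

lemma chiR_poly (x : ℝ) (hx : 0 ≤ x) :
    (x+5/4)*(x+1/2)^2*(4*(2*x+1)^2-1)*(4*(2*x+3)^2)
      ≤ (x+1/4)*(x+1)^2*(4*(2*x+3)^2-1)*(4*(2*x+1)^2) := by
  nlinarith [sq_nonneg x, hx]

lemma chiR_antitone : Antitone (fun m => chiC m / chiD m) := by
  apply antitone_nat_of_succ_le
  intro m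
  have hc := chiC_pos m
  have hD0 := chiD_pos m
  have hD1 := chiD_pos (m+1)
  set x := (m:ℝ) with hx
  have hm : (0:ℝ) ≤ x := Nat.cast_nonneg m
  have e1 : chiD m = (4*(2*x+1)^2 - 1)/(4*(2*x+1)^2) := by
    unfold chiD; rw [← hx]; field_simp
  have e2 : chiD (m+1) = (4*(2*x+3)^2 - 1)/(4*(2*x+3)^2) := by
    unfold chiD; push_cast; rw [← hx]; field_simp; ring
  have hA : (0:ℝ) < 4*(2*x+1)^2 - 1 := by nlinarith
  have hB : (0:ℝ) < 4*(2*x+3)^2 - 1 := by nlinarith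
  have hY1 : (0:ℝ) < 4*(2*x+1)^2 := by positivity
  have hY2 : (0:ℝ) < 4*(2*x+3)^2 := by positivity
  have hQ : (0:ℝ) < (x+1/4)*(x+1)^2 := by positivity
  have hpoly := chiR_poly x hm
  simp only [div_le_div_iff₀ hD1 hD0]
  set M := ((x+1/4)*(x+1)^2) * (4*(2*x+1)^2) * (4*(2*x+3)^2) with hM
  have hMpos : 0 < M := by rw [hM]; positivity
  have L : chiC (m+1) * chiD m * M
      = chiC m * ((x+5/4)*(x+1/2)^2) * ((4*(2*x+1)^2-1) * (4*(2*x+3)^2)) := by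
    rw [chiC_succ, e1, hM, ← hx]
    field_simp
  have R : chiC m * chiD (m+1) * M
      = chiC m * ((x+1/4)*(x+1)^2) * ((4*(2*x+3)^2-1) * (4*(2*x+1)^2)) := by
    rw [e2, hM]
    field_simp
  have hLR : chiC (m+1) * chiD m * M ≤ chiC m * chiD (m+1) * M := by
    rw [L, R]
    nlinarith [mul_le_mul_of_nonneg_left hpoly hc.le]
  exact le_of_mul_le_mul_right hLR hMpos

lemma chiD_le_chiC (m : ℕ) : chiD m ≤ chiC m := by
  have h1 : (1:ℝ) ≤ chiC m / chiD m := by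
    have ht : Tendsto (fun m => chiC m / chiD m) atTop (𝓝 1) := by
      have := chiC_tendsto.div chiD_tendsto one_ne_zero
      simpa [Pi.div_def] using this
    exact chiR_antitone.le_of_tendsto ht m
  have hD := chiD_pos m
  rw [le_div_iff₀ hD] at h1
  linarith

lemma chiB_odd_val (m : ℕ) : chiB (2*m+1) = ((m:ℝ)+1/4) / chiC m := by
  have hB := chiB_pos (2*m+1) (by omega)
  have hc := chiC_pos m
  unfold chiC
  field_simp

lemma chiB_bounds (n : ℕ) (hn : 0 < n) :
    (n:ℝ)/2 - 1/4 ≤ chiB n ∧ chiB n < (n:ℝ)/2 := by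
  have key : ∀ m : ℕ, (4*(2*(m:ℝ)+1)^2 - 1) ≤ 4*(2*(m:ℝ)+1)^2 * chiC m := by
    intro m
    have h := chiD_le_chiC m
    unfold chiD at h
    have h1 : (0:ℝ) < 4*(2*(m:ℝ)+1)^2 := by positivity
    have h2 : (1 - 1/(4*(2*(m:ℝ)+1)^2)) * (4*(2*(m:ℝ)+1)^2)
        = 4*(2*(m:ℝ)+1)^2 - 1 := by field_simp
    nlinarith
  obtain ⟨m, rfl | rfl⟩ := Nat.even_or_odd' n
  · -- n = 2m, m ≥ 1; write m = k+1
    obtain ⟨k, rfl⟩ : ∃ k, m = k + 1 := ⟨m - 1, by omega⟩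
    have e : 2*(k+1) = 2*k+2 := by ring
    rw [e, chiB_even, chiB_odd_val]
    have hc := chiC_pos k
    have hc1 := chiC_lt_one k
    have hk := key k
    have hm : (0:ℝ) ≤ (k:ℝ) := Nat.cast_nonneg k
    have hc4 : (0:ℝ) < ((k:ℝ)+1/4) := by linarith
    have hv : ((k:ℝ)+1/2)^2 / (((k:ℝ)+1/4) / chiC k)
        = ((k:ℝ)+1/2)^2 * chiC k / ((k:ℝ)+1/4) := by
      field_simp
    rw [hv]
    have hcast : ((2*k+2:ℕ):ℝ) = 2*(k:ℝ)+2 := by push_cast; ring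
    rw [hcast]
    constructor
    · rw [le_div_iff₀ hc4]
      nlinarith
    · rw [div_lt_iff₀ hc4]
      nlinarith [mul_pos (show (0:ℝ) < ((k:ℝ)+1/2)^2 by positivity) (sub_pos.mpr hc1)]
  · -- n = 2m+1
    rw [chiB_odd_val]
    have hc := chiC_pos m
    have hc1 := chiC_le_one m
    have hk := key m
    have hm : (0:ℝ) ≤ (m:ℝ) := Nat.cast_nonneg m
    have hcast : ((2*m+1:ℕ):ℝ) = 2*(m:ℝ)+1 := by push_cast; ring
    rw [hcast]
    constructor
    · rw [le_div_iff₀ hc]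
      nlinarith
    · rw [div_lt_iff₀ hc]
      nlinarith

theorem chi_variance_bounds (n : ℕ) (hn : 0 < n) :
    0 < (n : ℝ) - 2 * (Real.Gamma (((n : ℝ) + 1) / 2) / Real.Gamma ((n : ℝ) / 2)) ^ 2 ∧
      (n : ℝ) - 2 * (Real.Gamma (((n : ℝ) + 1) / 2) / Real.Gamma ((n : ℝ) / 2)) ^ 2 ≤ 1 / 2 := by
  obtain ⟨h1, h2⟩ := chiB_bounds n hn
  unfold chiB at h1 h2
  constructor <;> linarith
end
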